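/- Let Γ be a finite connected graph and α an axial function with values in nonzero linear forms on t_ℚ (modulo sign), satisfying the GKM₂ condition that weights of edges at a common vertex are pairwise linearly independent. Suppose (a_v)_{v∈V} ∈ ℚ^V satisfies: for every edge e joining v to w, a_v·p_v ≡ ± a_w·p_w mod α(e), where p_v is a fixed product of k linear forms each pairwise linearly independent from α(e). If (a_v) is not identically zero, then a_v ≠ 0 for all v. -/

import Mathlib

/-- The linear form in `S(t*_ℚ) = ℚ[x₁,…,x_n]` associated to a coefficient
vector `w : Fin n → ℚ`. -/
noncomputable def linF (n : ℕ) (w : Fin n → ℚ) : MvPolynomial (Fin n) ℚ :=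
  ∑ i, MvPolynomial.C (w i) * MvPolynomial.X i

open MvPolynomial in
lemma linF_eval (n : ℕ) (w x : Fin n → ℚ) :
    MvPolynomial.eval x (linF n w) = ∑ i, w i * x i := by
  simp [linF]

open MvPolynomial in
lemma linF_rename (n : ℕ) (σ : Equiv.Perm (Fin n)) (w : Fin n → ℚ) :
    MvPolynomial.rename σ (linF n w) = linF n (w ∘ σ.symm) := by
  rw [linF, map_sum]
  rw [linF]
  rw [← Equiv.sum_comp σ (fun j => (MvPolynomial.C ((w ∘ σ.symm) j) * MvPolynomial.X j))]
  refine Finset.sum_congr rfl fun j _ => ?_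
  simp

open MvPolynomial in
lemma linF_prime_aux (m : ℕ) (w : Fin (m+1) → ℚ) (hw : w 0 ≠ 0) :
    Prime (linF (m+1) w) := by
  rw [← MulEquiv.prime_iff (MvPolynomial.finSuccEquiv ℚ m).toMulEquiv]
  have himg : MvPolynomial.finSuccEquiv ℚ m (linF (m+1) w) =
      Polynomial.C (MvPolynomial.C (w 0)) * Polynomial.X
        + Polynomial.C (∑ j : Fin m, MvPolynomial.C (w j.succ) * MvPolynomial.X j) := by
    rw [linF, map_sum, Fin.sum_univ_succ]
    simp [finSuccEquiv_X_zero, finSuccEquiv_X_succ, map_sum, finSuccEquiv_apply]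
  rw [show ((MvPolynomial.finSuccEquiv ℚ m).toMulEquiv (linF (m+1) w))
      = MvPolynomial.finSuccEquiv ℚ m (linF (m+1) w) from rfl, himg]
  set r := ∑ j : Fin m, MvPolynomial.C (w j.succ) * MvPolynomial.X j with hr
  have hq : Prime (Polynomial.X + Polynomial.C (MvPolynomial.C (w 0)⁻¹ * r) :
      Polynomial (MvPolynomial (Fin m) ℚ)) := by
    apply Polynomial.Monic.prime_of_degree_eq_one
    · exact Polynomial.degree_X_add_C _
    · exact Polynomial.monic_X_add_C _
  have hu : IsUnit (Polynomial.C (MvPolynomial.C (w 0)) :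
      Polynomial (MvPolynomial (Fin m) ℚ)) :=
    ((hw.isUnit).map MvPolynomial.C).map Polynomial.C
  have heq : Polynomial.C (MvPolynomial.C (w 0)) * Polynomial.X + Polynomial.C r =
      Polynomial.C (MvPolynomial.C (w 0)) *
        (Polynomial.X + Polynomial.C (MvPolynomial.C (w 0)⁻¹ * r)) := by
    rw [mul_add, ← Polynomial.C_mul]
    congr 1
    rw [← mul_assoc, ← MvPolynomial.C_mul, mul_inv_cancel₀ hw, MvPolynomial.C_1, one_mul]
  rw [heq]
  exact ((associated_unit_mul_left _ _ hu).symm).prime hq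

open MvPolynomial in
lemma linF_prime (n : ℕ) (w : Fin n → ℚ) (hw : w ≠ 0) : Prime (linF n w) := by
  obtain ⟨i, hi⟩ : ∃ i, w i ≠ 0 := by
    by_contra h; push_neg at h; exact hw (funext h)
  cases n with
  | zero => exact (hw (funext fun j => j.elim0)).elim
  | succ m =>
    have hσ : Prime (MvPolynomial.rename (Equiv.swap (0 : Fin (m+1)) i) (linF (m+1) w)) := by
      rw [linF_rename]
      apply linF_prime_aux
      simp [Equiv.swap_apply_left, hi]
    exact (MulEquiv.prime_iff (MvPolynomial.renameEquiv ℚ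
      (Equiv.swap (0 : Fin (m+1)) i)).toMulEquiv).mp hσ

lemma linF_not_dvd (n : ℕ) (u v : Fin n → ℚ) (h : LinearIndependent ℚ ![u, v]) :
    ¬ linF n u ∣ linF n v := by
  have hu0 : u ≠ 0 := by simpa using h.ne_zero 0
  have hns : ∀ c : ℚ, c • u ≠ v := (LinearIndependent.pair_iff' hu0).mp h
  set d : ℚ := ∑ j, u j * u j with hd_def
  set c : ℚ := ∑ j, u j * v j with hc_def
  have hd : d ≠ 0 := by
    intro h0
    apply hu0
    funext j
    exact mul_self_eq_zero.mp
      ((Finset.sum_eq_zero_iff_of_nonneg (fun i _ => mul_self_nonneg (u i))).mp h0 j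
        (Finset.mem_univ j))
  set x : Fin n → ℚ := fun i => d * v i - c * u i with hx_def
  have hux : ∑ i, u i * x i = 0 := by
    have h1 : ∀ i, u i * x i = d * (u i * v i) - c * (u i * u i) := fun i => by
      simp only [hx_def]; ring
    rw [Finset.sum_congr rfl fun i _ => h1 i, Finset.sum_sub_distrib,
      ← Finset.mul_sum, ← Finset.mul_sum, ← hc_def, ← hd_def]
    ring
  have hvx : ∑ i, v i * x i ≠ 0 := by
    intro hE
    have hxx : ∑ i, x i * x i = 0 := by
      have h1 : ∀ i, x i * x i = d * (v i * x i) - c * (u i * x i) := fun i => by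
        simp only [hx_def]; ring
      rw [Finset.sum_congr rfl fun i _ => h1 i, Finset.sum_sub_distrib,
        ← Finset.mul_sum, ← Finset.mul_sum, hE, hux]
      ring
    have hx0 : ∀ i, x i = 0 := fun i =>
      mul_self_eq_zero.mp
        ((Finset.sum_eq_zero_iff_of_nonneg (fun i _ => mul_self_nonneg (x i))).mp hxx i
          (Finset.mem_univ i))
    apply hns (c / d)
    funext i
    have h2 := hx0 i
    simp only [hx_def] at h2
    have : d * v i = c * u i := by linarith
    simp only [Pi.smul_apply, smul_eq_mul]
    field_simp
    linarith
  intro hdvd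
  have h3 := map_dvd (MvPolynomial.eval x) hdvd
  rw [linF_eval, linF_eval, hux] at h3
  exact hvx (zero_dvd_iff.mp h3)

/-- Let `Γ` be a finite connected graph with axial function `α`
(edge `vw` carries the nonzero linear form with coefficient vector `A v w`,
well defined up to sign) satisfying the GKM₂ condition that the weights of
edges at a common vertex are pairwise linearly independent.  Suppose
`(a_v) ∈ ℚ^V` satisfies, for every edge `vw`,
`a_v·p_v ≡ ± a_w·p_w mod α(e)`, where `p_v = ∏ᵢ linF(q v i)` is a fixed
product of `k` linear forms each pairwise linearly independent from `α(e)`.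
If `(a_v)` is not identically zero, then `a_v ≠ 0` for all `v`. -/
theorem stmt_16 (n k : ℕ) (V : Type) [Fintype V]
    (G : SimpleGraph V) (hconn : G.Connected)
    (A : V → V → (Fin n → ℚ))
    (hsymA : ∀ v w, A v w = A w v)
    (hGKM2 : ∀ v w w', G.Adj v w → G.Adj v w' → w ≠ w' →
        LinearIndependent ℚ ![A v w, A v w'])
    (q : V → Fin k → (Fin n → ℚ))
    (hpind : ∀ v w, G.Adj v w → ∀ i,
        LinearIndependent ℚ ![A v w, q v i] ∧ LinearIndependent ℚ ![A v w, q w i])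
    (a : V → ℚ)
    (hdiv : ∀ v w, G.Adj v w →
        linF n (A v w) ∣
          (MvPolynomial.C (a v) * ∏ i, linF n (q v i)
            - MvPolynomial.C (a w) * ∏ i, linF n (q w i)) ∨
        linF n (A v w) ∣
          (MvPolynomial.C (a v) * ∏ i, linF n (q v i)
            + MvPolynomial.C (a w) * ∏ i, linF n (q w i)))
    (hnz : ∃ v, a v ≠ 0) :
    ∀ v, a v ≠ 0 := by
  have step : ∀ v w, G.Adj v w → a w ≠ 0 → a v ≠ 0 := by
    intro v w hadj hw hv
    have hdvd : linF n (A v w) ∣ MvPolynomial.C (a w) * ∏ i, linF n (q w i) := by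
      rcases hdiv v w hadj with h | h
      · rw [hv, map_zero, zero_mul, zero_sub] at h
        exact dvd_neg.mp h
      · rwa [hv, map_zero, zero_mul, zero_add] at h
    by_cases hA : A v w = 0
    · have hl : linF n (A v w) = 0 := by simp [hA, linF]
      rw [hl, zero_dvd_iff] at hdvd
      rcases mul_eq_zero.mp hdvd with h | h
      · exact hw (by simpa using h)
      · obtain ⟨i, _, hi⟩ := Finset.prod_eq_zero_iff.mp h
        exact (hpind v w hadj i).1.ne_zero 0 (by simp [hA])
    · have hprime := linF_prime n (A v w) hA
      rcases (hprime.dvd_mul).mp hdvd with h | h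
      · exact hprime.not_unit (isUnit_of_dvd_unit h ((hw.isUnit).map MvPolynomial.C))
      · obtain ⟨i, _, hi⟩ := hprime.exists_mem_finset_dvd h
        exact linF_not_dvd n (A v w) (q w i) (hpind v w hadj i).2 hi
  have walkstep : ∀ {x y : V} (p : G.Walk x y), a x ≠ 0 → a y ≠ 0 := by
    intro x y p
    induction p with
    | nil => exact id
    | cons h p ih => exact fun hx => ih (step _ _ h.symm hx)
  obtain ⟨v0, hv0⟩ := hnz
  intro v
  exact (hconn v0 v).elim fun p => walkstep p hv0
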